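/- Let W be an (ℓ-1)-dimensional vector space over a field of prime characteristic ℓ ≥ 5, and A a unipotent linear operator on W whose Jordan form is a single Jordan block of size ℓ-1. If 2 ≤ r ≤ ℓ-3, then (Λ^r(A) - 1)^{ℓ-1} ≠ 0. -/

import Mathlib

set_option maxHeartbeats 1000000

open Polynomial Finset Matrix ExteriorAlgebra

section AuxLemmas

variable {K : Type*} [Field K]

lemma my_coeff_prod_eq {ι : Type*} (s : Finset ι) (f : ι → K[X]) (d : ι → ℕ)
    (h : ∀ i ∈ s, (f i).natDegree ≤ d i) :
    (∏ i ∈ s, f i).coeff (∑ i ∈ s, d i) = ∏ i ∈ s, (f i).coeff (d i) := by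
  induction s using Finset.cons_induction with
  | empty => simp
  | cons a s ha ih =>
    rw [Finset.prod_cons, Finset.sum_cons, Finset.prod_cons,
      Polynomial.coeff_mul_add_eq_of_natDegree_le (h a (Finset.mem_cons_self a s))
        (le_trans (Polynomial.natDegree_prod_le _ _)
          (Finset.sum_le_sum fun i hi => h i (Finset.mem_cons_of_mem hi))),
      ih fun i hi => h i (Finset.mem_cons_of_mem hi)]

lemma my_cast_choose {p : ℕ} (hp : p.Prime) [CharP K p] :
    ∀ {m : ℕ}, m ≤ p - 1 → (((p-1).choose m : ℕ) : K) = (-1)^m := by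
  intro m
  induction m with
  | zero => simp
  | succ m ih =>
    intro hm
    have hm' : m ≤ p - 1 := le_trans (Nat.le_succ m) hm
    have key := Nat.choose_succ_right_eq (p-1) m
    have hmK : ((m : K) + 1) ≠ 0 := by
      have : ¬ (p ∣ (m+1)) := by
        intro hdvd
        have := Nat.le_of_dvd (Nat.succ_pos m) hdvd
        omega
      have := (CharP.cast_eq_zero_iff K p (m+1)).not.mpr this
      push_cast at this
      exact this
    have hcast : (((p - 1 - m : ℕ)) : K) = -((m : K) + 1) := by
      have h1 : ((p - 1 - m : ℕ) : K) = ((p - 1 : ℕ) : K) - (m : K) := by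
        rw [Nat.cast_sub (by omega)]
      have h2 : ((p - 1 : ℕ) : K) = -1 := by
        rw [Nat.cast_sub (by omega)]
        simp [CharP.cast_eq_zero K p]
      rw [h1, h2]; ring
    have keyK : (((p-1).choose (m+1) : ℕ) : K) * ((m : K) + 1)
        = (-1) ^ m * (-((m:K) + 1)) := by
      have := congrArg (fun n : ℕ => (n : K)) key
      push_cast at this
      rw [this, ih hm', hcast]
    have : (((p-1).choose (m+1) : ℕ) : K) = (-1)^(m+1) := by
      refine mul_right_cancel₀ hmK ?_
      rw [keyK]; ring
    rw [this]

lemma my_sub_one_pow {p : ℕ} (hp : p.Prime) (hp2 : 2 < p) [CharP K p]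
    {R : Type*} [Ring R] [Algebra K R] (g : R) :
    (g - 1)^(p-1) = ∑ m ∈ range p, g^m := by
  have hcomm : Commute g (-1 : R) := (Commute.one_right g).neg_right
  have h := hcomm.add_pow (p-1)
  rw [sub_eq_add_neg, h]
  rw [show p - 1 + 1 = p from Nat.succ_pred_eq_of_pos hp.pos]
  refine Finset.sum_congr rfl fun m hm => ?_
  rw [Finset.mem_range] at hm
  have hm' : m ≤ p - 1 := by omega
  have hC : (((p-1).choose m : ℕ) : R) = ((-1 : R))^m := by
    calc (((p-1).choose m : ℕ) : R) = algebraMap K R (((p-1).choose m : ℕ) : K) := by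
          rw [map_natCast]
      _ = algebraMap K R ((-1)^m) := by rw [my_cast_choose hp hm']
      _ = ((-1 : R))^m := by rw [map_pow, map_neg, _root_.map_one]
  rw [hC, mul_assoc, ← pow_add]
  have : p - 1 - m + m = p - 1 := by omega
  rw [this]
  have heven : Even (p - 1) := by
    have hodd : Odd p := hp.odd_of_ne_two (by omega)
    exact Nat.Odd.sub_odd hodd odd_one
  rw [heven.neg_one_pow, mul_one]

lemma my_sum_cast_pow {p : ℕ} (hp : p.Prime) [CharP K p] (i : ℕ) :
    ∑ m ∈ range p, ((m : K))^i = if i = p - 1 then -1 else if i < p - 1 then 0 else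
      ∑ m ∈ range p, ((m : K))^i := by
  haveI : Fact p.Prime := ⟨hp⟩
  have hcast : ∀ m : ℕ, (m : K) = (ZMod.castHom (dvd_refl p) K) ((m : ZMod p)) := by
    intro m; rw [map_natCast]
  have hsum : ∀ j : ℕ, ∑ m ∈ range p, ((m : ZMod p))^j = ∑ x : ZMod p, x^j := by
    intro j
    refine Finset.sum_nbij' (fun m => (m : ZMod p)) (fun x => x.val) ?_ ?_ ?_ ?_ ?_
    · intro a _; exact Finset.mem_univ _
    · intro x _; rw [Finset.mem_range]; exact ZMod.val_lt x
    · intro a ha; rw [Finset.mem_range] at ha; exact ZMod.val_cast_of_lt ha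
    · intro x _; exact ZMod.natCast_rightInverse x
    · intro a _; rfl
  have key : ∀ j : ℕ, ∑ m ∈ range p, ((m : K))^j
      = (ZMod.castHom (dvd_refl p) K) (∑ x : ZMod p, x^j) := by
    intro j
    rw [← hsum j, map_sum]
    exact Finset.sum_congr rfl fun m _ => by rw [hcast, map_pow]
  by_cases h1 : i = p - 1
  · rw [if_pos h1, key, h1]
    have : ∑ x : ZMod p, x^(p-1) = -1 := by
      have h0 : (0 : ZMod p) ∈ Finset.univ := Finset.mem_univ _
      rw [← Finset.add_sum_erase _ _ h0, zero_pow (by have := hp.two_le; omega),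
        zero_add]
      have : ∀ x ∈ Finset.univ.erase (0 : ZMod p), x^(p-1) = 1 := by
        intro x hx
        have hx0 : x ≠ 0 := (Finset.mem_erase.mp hx).1
        exact ZMod.pow_card_sub_one_eq_one hx0
      rw [Finset.sum_congr rfl this, Finset.sum_const, Finset.card_erase_of_mem h0,
        Finset.card_univ, ZMod.card, nsmul_eq_mul, mul_one]
      have : ((p - 1 : ℕ) : ZMod p) = -1 := by
        rw [Nat.cast_sub hp.one_le, ZMod.natCast_self, Nat.cast_one]; ring
      exact this
    rw [this, map_neg, _root_.map_one]
  · by_cases h2 : i < p - 1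
    · rw [if_neg h1, if_pos h2, key]
      have : ∑ x : ZMod p, x^i = 0 := by
        have := FiniteField.sum_pow_lt_card_sub_one (ZMod p) i (by rwa [ZMod.card])
        exact this
      rw [this, map_zero]
    · rw [if_neg h1, if_neg h2]

lemma my_exists_T (p r : ℕ) (hp5 : 5 ≤ p) (hr2 : 2 ≤ r) (hr3 : r ≤ p - 3) :
    ∃ t : ℕ → ℕ, (∀ a b, a < b → b < r → t a < t b) ∧ (∀ a, a < r → t a ≤ p - 2) ∧
      (∑ a ∈ range r, t a) = (p - 1) + ∑ a ∈ range r, a := by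
  set M := p - 1 - r with hM
  have hM2 : 2 ≤ M := by omega
  set g : ℕ → ℕ := fun j => min (j * M) (p - 1) with hg
  have gmono : Monotone g := fun a b hab => by
    simp only [hg]
    exact min_le_min (Nat.mul_le_mul_right M hab) le_rfl
  set c : ℕ → ℕ := fun a => g (r - a) - g (r - 1 - a) with hc
  have hkey : p - 1 ≤ r * M := by
    have : r + M ≤ r * M := Nat.add_le_mul hr2 hM2
    omega
  have hcalt : ∀ a, a < r → c a = min M ((p-1) - g (r - 1 - a)) := by
    intro a ha
    have h1 : r - a = (r - 1 - a) + 1 := by omega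
    simp only [hc, h1, hg]
    have h2 : (r - 1 - a + 1) * M = (r-1-a) * M + M := by ring
    rw [h2]
    omega
  have hcmono : ∀ a b, a ≤ b → b < r → c a ≤ c b := by
    intro a b hab hb
    rw [hcalt a (by omega), hcalt b hb]
    have : g (r - 1 - b) ≤ g (r - 1 - a) := gmono (by omega)
    omega
  have hcle : ∀ a, a < r → c a ≤ M := fun a ha => by
    rw [hcalt a ha]; exact min_le_left _ _
  refine ⟨fun a => a + c a, ?_, ?_, ?_⟩
  · intro a b hab hb
    have := hcmono a b (le_of_lt hab) hb
    show a + c a < b + c b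
    omega
  · intro a ha
    have := hcle a ha
    show a + c a ≤ p - 2
    omega
  · have hsc : ∑ a ∈ range r, c a = p - 1 := by
      have : ∑ a ∈ range r, c a = ∑ a ∈ range r, c (r - 1 - a) := by
        rw [Finset.sum_range_reflect]
      rw [this]
      have hrw : ∀ a ∈ range r, c (r - 1 - a) = g (a + 1) - g a := by
        intro a ha
        rw [Finset.mem_range] at ha
        simp only [hc]
        have e1 : r - (r - 1 - a) = a + 1 := by omega
        have e2 : r - 1 - (r - 1 - a) = a := by omega
        rw [e1, e2]
      rw [Finset.sum_congr rfl hrw, Finset.sum_range_tsub (fun a b hab => gmono hab)]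
      simp only [hg]
      omega
    show (∑ a ∈ range r, (a + c a)) = p - 1 + ∑ a ∈ range r, a
    rw [Finset.sum_add_distrib, hsc]
    omega

end AuxLemmas

lemma my_core {K : Type*} [Field K] {p r : ℕ} (hp : p.Prime) (hp5 : 5 ≤ p) [CharP K p]
    (hr1 : 1 ≤ r)
    (t : ℕ → ℕ) (htmono : ∀ a b, a < b → b < r → t a < t b)
    (htle : ∀ a, a < r → t a ≤ p - 2)
    (htsum : ∑ a ∈ range r, t a = (p - 1) + ∑ a ∈ range r, a)
    (γ : ℕ → K) (hγ0 : ∀ e, p - 1 ≤ e → γ e = 0) (hγtop : γ (p - 2) ≠ 0) :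
    ∑ m ∈ range p, (Matrix.of fun i j : Fin r =>
      ∑ k ∈ range (m + 1), γ (p - 2 - t (j : ℕ) + ((i : ℕ) + k)) * (m.choose k : K)).det ≠ 0 := by
  have hfact : ∀ k : ℕ, k ≤ p - 1 → ((k.factorial : ℕ) : K) ≠ 0 := by
    intro k hk
    rw [Ne, CharP.cast_eq_zero_iff K p]
    intro hdvd
    have := (Nat.Prime.dvd_factorial hp).mp hdvd
    omega
  set Ch : ℕ → K[X] := fun k => Polynomial.C ((k.factorial : K)⁻¹) * descPochhammer K k with hCh
  have hChdeg : ∀ k, (Ch k).natDegree ≤ k := by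
    intro k
    refine le_trans (natDegree_C_mul_le _ _) ?_
    rw [descPochhammer_natDegree]
  have hChcoeff : ∀ k, (Ch k).coeff k = (k.factorial : K)⁻¹ := by
    intro k
    rw [hCh, coeff_C_mul]
    have h1 : (descPochhammer K k).coeff k = 1 := by
      have := (monic_descPochhammer K k).coeff_natDegree
      rwa [descPochhammer_natDegree] at this
    rw [h1, mul_one]
  have hCheval : ∀ (m k : ℕ), k ≤ p - 1 → (Ch k).eval ((m : K)) = (m.choose k : K) := by
    intro m k hk
    rw [hCh, eval_mul, eval_C, descPochhammer_eval_eq_descFactorial,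
      Nat.descFactorial_eq_factorial_mul_choose]
    push_cast
    rw [← mul_assoc, inv_mul_cancel₀ (hfact k hk), one_mul]
  set E : Matrix (Fin r) (Fin r) K[X] := Matrix.of fun i j : Fin r =>
    ∑ k ∈ range p, Polynomial.C (γ (p - 2 - t (j : ℕ) + ((i : ℕ) + k))) * Ch k with hE
  have htle' : ∀ j : Fin r, t (j : ℕ) ≤ p - 2 := fun j => htle _ j.isLt
  -- evaluation
  have heval : ∀ m ∈ range p, (Matrix.of fun i j : Fin r =>
      ∑ k ∈ range (m + 1), γ (p - 2 - t (j : ℕ) + ((i : ℕ) + k)) * (m.choose k : K)).det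
      = E.det.eval ((m : K)) := by
    intro m hm
    rw [Finset.mem_range] at hm
    rw [show E.det.eval ((m : K)) = (evalRingHom ((m:K))) E.det from rfl, RingHom.map_det]
    congr 1
    ext i j
    calc (∑ k ∈ range (m + 1), γ (p - 2 - t (j : ℕ) + ((i : ℕ) + k)) * (m.choose k : K))
        = ∑ k ∈ range p, γ (p - 2 - t (j : ℕ) + ((i : ℕ) + k)) * (m.choose k : K) := by
          refine Finset.sum_subset (Finset.range_subset_range.mpr (by omega)) ?_
          intro k _ hk
          rw [Finset.mem_range, not_lt] at hk
          rw [Nat.choose_eq_zero_of_lt (by omega), Nat.cast_zero, mul_zero]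
      _ = ∑ k ∈ range p, γ (p - 2 - t (j : ℕ) + ((i : ℕ) + k)) * (Ch k).eval ((m : K)) :=
          Finset.sum_congr rfl fun k hk => by
            rw [Finset.mem_range] at hk
            rw [hCheval m k (by omega)]
      _ = (evalRingHom ((m : K))).mapMatrix E i j := by
          simp only [RingHom.mapMatrix_apply, Matrix.map_apply, hE, Matrix.of_apply,
            coe_evalRingHom, eval_finset_sum, eval_mul, eval_C]
  have hE0 : ∀ i j : Fin r, t (j : ℕ) < (i : ℕ) → E i j = 0 := by
    intro i j hij
    rw [hE, Matrix.of_apply]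
    refine Finset.sum_eq_zero fun k _ => ?_
    rw [hγ0 _ (by have := htle' j; omega), map_zero, zero_mul]
  have hEdeg : ∀ i j : Fin r, (i : ℕ) ≤ t (j : ℕ) → (E i j).natDegree ≤ t (j : ℕ) - (i : ℕ) := by
    intro i j hij
    rw [hE, Matrix.of_apply]
    refine natDegree_sum_le_of_forall_le _ _ fun k _ => ?_
    by_cases hk : k ≤ t (j : ℕ) - (i : ℕ)
    · exact le_trans (natDegree_C_mul_le _ _) (le_trans (hChdeg k) hk)
    · rw [hγ0 _ (by have := htle' j; omega), map_zero, zero_mul]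
      simp
  have hEcoeff : ∀ i j : Fin r, (i : ℕ) ≤ t (j : ℕ) →
      (E i j).coeff (t (j : ℕ) - (i : ℕ)) = γ (p - 2) * (((t (j : ℕ) - (i : ℕ)).factorial : K))⁻¹ := by
    intro i j hij
    rw [hE, Matrix.of_apply, finset_sum_coeff]
    rw [Finset.sum_eq_single (t (j : ℕ) - (i : ℕ))]
    · rw [coeff_C_mul, hChcoeff]
      congr 2
      have := htle' j
      omega
    · intro k _ hk
      rcases lt_or_gt_of_ne hk with h1 | h1
      · rw [coeff_C_mul]
        rw [coeff_eq_zero_of_natDegree_lt (lt_of_le_of_lt (hChdeg k) h1), mul_zero]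
      · rw [hγ0 _ (by have := htle' j; omega), map_zero, zero_mul, coeff_zero]
    · intro habs
      exfalso
      apply habs
      rw [Finset.mem_range]
      have := htle' j
      omega
  -- sum over permutations, degree ≤ p - 1 and top coefficient
  have hdsum : ∀ σ : Equiv.Perm (Fin r), (∀ i : Fin r, ((σ i : ℕ)) ≤ t (i : ℕ)) →
      ∑ i : Fin r, (t (i : ℕ) - (σ i : ℕ)) = p - 1 := by
    intro σ hσ
    have h1 : (∑ i : Fin r, (t (i : ℕ) - (σ i : ℕ))) + ∑ i : Fin r, ((σ i : ℕ))
        = ∑ i : Fin r, t (i : ℕ) := by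
      rw [← Finset.sum_add_distrib]
      exact Finset.sum_congr rfl fun i _ => Nat.sub_add_cancel (hσ i)
    have h2 : ∑ i : Fin r, ((σ i : ℕ)) = ∑ i : Fin r, (i : ℕ) :=
      Equiv.sum_comp σ (fun i : Fin r => (i : ℕ))
    have h3 : ∑ i : Fin r, t (i : ℕ) = (p - 1) + ∑ i : Fin r, (i : ℕ) := by
      rw [Fin.sum_univ_eq_sum_range (fun a => t a), Fin.sum_univ_eq_sum_range (fun a => a)]
      exact htsum
    omega
  have hdetrw : E.det = ∑ σ : Equiv.Perm (Fin r),
      ((Equiv.Perm.sign σ : ℤ) : K[X]) * ∏ i : Fin r, E (σ i) i := by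
    rw [Matrix.det_apply]
    simp only [Units.smul_def, zsmul_eq_mul]
  have hPdeg : E.det.natDegree ≤ p - 1 := by
    rw [hdetrw]
    refine natDegree_sum_le_of_forall_le _ _ fun σ _ => ?_
    refine le_trans natDegree_mul_le ?_
    rw [natDegree_intCast, zero_add]
    by_cases hσ : ∀ i : Fin r, ((σ i : ℕ)) ≤ t (i : ℕ)
    · refine le_trans (natDegree_prod_le _ _) ?_
      rw [← hdsum σ hσ]
      exact Finset.sum_le_sum fun i _ => hEdeg (σ i) i (hσ i)
    · push_neg at hσ
      obtain ⟨i, hi⟩ := hσ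
      have h1 : (∏ i : Fin r, E (σ i) i) = 0 :=
        Finset.prod_eq_zero (Finset.mem_univ i) (hE0 (σ i) i hi)
      rw [h1]
      simp
  set Qe : Matrix (Fin r) (Fin r) K := Matrix.of fun i j : Fin r =>
    if (i : ℕ) ≤ t (j : ℕ) then γ (p - 2) * (((t (j : ℕ) - (i : ℕ)).factorial : K))⁻¹ else 0
    with hQe
  have hPcoeff : E.det.coeff (p - 1) = Qe.det := by
    rw [hdetrw, finset_sum_coeff, Matrix.det_apply]
    refine Finset.sum_congr rfl fun σ _ => ?_
    rw [coeff_intCast_mul, Units.smul_def, zsmul_eq_mul]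
    congr 1
    by_cases hσ : ∀ i : Fin r, ((σ i : ℕ)) ≤ t (i : ℕ)
    · rw [← hdsum σ hσ, my_coeff_prod_eq _ _ _ (fun i _ => hEdeg (σ i) i (hσ i))]
      refine Finset.prod_congr rfl fun i _ => ?_
      rw [hEcoeff (σ i) i (hσ i), hQe, Matrix.of_apply, if_pos (hσ i)]
    · push_neg at hσ
      obtain ⟨i, hi⟩ := hσ
      have h1 : (∏ i : Fin r, E (σ i) i) = 0 :=
        Finset.prod_eq_zero (Finset.mem_univ i) (hE0 (σ i) i hi)
      have h2 : (∏ i : Fin r, Qe (σ i) i) = 0 :=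
        Finset.prod_eq_zero (Finset.mem_univ i)
          (by rw [hQe, Matrix.of_apply, if_neg (by omega)])
      rw [h1, h2, coeff_zero]
  -- the determinant of Qe is nonzero
  have hQdet : Qe.det ≠ 0 := by
    have hfacts : ∀ j : Fin r, ((t (j : ℕ)).factorial : K) ≠ 0 :=
      fun j => hfact _ (by have := htle' j; omega)
    have hQe2 : Qe = Matrix.of fun i j : Fin r =>
        (γ (p - 2) * ((t (j : ℕ)).factorial : K)⁻¹) *
          (((t (j : ℕ)).descFactorial (i : ℕ) : ℕ) : K) := by
      rw [hQe]
      ext i j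
      simp only [Matrix.of_apply]
      by_cases hij : (i : ℕ) ≤ t (j : ℕ)
      · rw [if_pos hij]
        have hkey : (((t (j:ℕ) - (i:ℕ)).factorial : ℕ) : K) *
            (((t (j:ℕ)).descFactorial (i:ℕ) : ℕ) : K) = (((t (j:ℕ)).factorial : ℕ) : K) := by
          rw [← Nat.cast_mul, Nat.factorial_mul_descFactorial hij]
        have hdf0 : (((t (j:ℕ)).descFactorial (i:ℕ) : ℕ) : K) ≠ 0 := by
          intro h0
          exact hfacts j (by rw [← hkey, h0, mul_zero])
        have hfs : (((t (j:ℕ) - (i:ℕ)).factorial : ℕ) : K) ≠ 0 :=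
          hfact _ (by have := htle' j; omega)
        field_simp [hdf0, hfs, hfacts j]
        rw [← hkey]
      · rw [if_neg hij]
        rw [Nat.descFactorial_eq_zero_iff_lt.mpr (by omega), Nat.cast_zero, mul_zero]
    rw [hQe2, show (Matrix.of fun i j : Fin r => γ (p - 2) * ((t (j : ℕ)).factorial : K)⁻¹ *
        (((t (j : ℕ)).descFactorial (i : ℕ) : ℕ) : K)) = Matrix.of fun i j =>
        (fun j : Fin r => γ (p - 2) * ((t (j : ℕ)).factorial : K)⁻¹) j *
        (Matrix.of fun i j : Fin r => (((t (j : ℕ)).descFactorial (i : ℕ) : ℕ) : K)) i j from rfl,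
      Matrix.det_mul_row]
    have hSdet : (Matrix.of fun i j : Fin r =>
        (descPochhammer K (j : ℕ)).eval (((t (i : ℕ) : ℕ) : K))).det
        = (Matrix.vandermonde fun i : Fin r => ((t (i : ℕ) : ℕ) : K)).det :=
      (Matrix.det_eval_matrixOfPolynomials_eq_det_vandermonde
        (fun i : Fin r => ((t (i : ℕ) : ℕ) : K)) (fun j : Fin r => descPochhammer K (j : ℕ))
        (fun j => descPochhammer_natDegree K (j : ℕ))
        (fun j => monic_descPochhammer K (j : ℕ))).symm
    have hStr : (Matrix.of fun i j : Fin r =>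
        (descPochhammer K (j : ℕ)).eval (((t (i : ℕ) : ℕ) : K)))ᵀ
        = Matrix.of fun i j : Fin r =>
        (((t (j : ℕ)).descFactorial (i : ℕ) : ℕ) : K) := by
      ext i j
      simp only [Matrix.transpose_apply, Matrix.of_apply]
      rw [descPochhammer_eval_eq_descFactorial]
    have hvdm : (Matrix.of fun i j : Fin r =>
        (((t (j : ℕ)).descFactorial (i : ℕ) : ℕ) : K)).det
        = (Matrix.vandermonde fun i : Fin r => ((t (i : ℕ) : ℕ) : K)).det := by
      rw [← hStr, Matrix.det_transpose, hSdet]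
    refine mul_ne_zero ?_ ?_
    · refine Finset.prod_ne_zero_iff.mpr fun j _ => ?_
      exact mul_ne_zero hγtop (inv_ne_zero (hfacts j))
    · show (Matrix.of fun i j : Fin r =>
          (((t (j : ℕ)).descFactorial (i : ℕ) : ℕ) : K)).det ≠ 0
      rw [hvdm, Matrix.det_vandermonde]
      refine Finset.prod_ne_zero_iff.mpr fun i _ => ?_
      refine Finset.prod_ne_zero_iff.mpr fun j hj => ?_
      rw [Finset.mem_Ioi] at hj
      have hij : t (i : ℕ) < t (j : ℕ) := htmono _ _ hj j.isLt
      have hne : (((t (j:ℕ) - t (i:ℕ) : ℕ)) : K) ≠ 0 := by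
        rw [Ne, CharP.cast_eq_zero_iff K p]
        intro hdvd
        have h1 := Nat.le_of_dvd (by omega) hdvd
        have := htle' j
        omega
      rw [Nat.cast_sub (le_of_lt hij)] at hne
      intro habs
      apply hne
      rw [habs]
  -- final computation
  have hfinal : ∑ m ∈ range p, E.det.eval ((m : K)) = - Qe.det := by
    have hdeglt : E.det.natDegree < p := by omega
    have h1 : ∀ m ∈ range p, E.det.eval ((m : K))
        = ∑ n ∈ range p, E.det.coeff n * ((m : K))^n := by
      intro m _
      exact eval_eq_sum_range' hdeglt _
    rw [Finset.sum_congr rfl h1, Finset.sum_comm]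
    have h2 : ∀ n ∈ range p, ∑ m ∈ range p, E.det.coeff n * ((m : K))^n
        = E.det.coeff n * ∑ m ∈ range p, ((m : K))^n := by
      intro n _
      rw [Finset.mul_sum]
    rw [Finset.sum_congr rfl h2]
    rw [Finset.sum_eq_single (p - 1)]
    · rw [my_sum_cast_pow hp, if_pos rfl, hPcoeff]
      ring
    · intro n hn hne
      rw [Finset.mem_range] at hn
      rw [my_sum_cast_pow hp, if_neg hne, if_pos (by omega), mul_zero]
    · intro habs
      exfalso
      exact habs (Finset.mem_range.mpr (by omega))
  rw [Finset.sum_congr rfl heval, hfinal]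
  exact neg_ne_zero.mpr hQdet

/-- The endomorphism of the `k`-th exterior power induced by an endomorphism. -/
noncomputable def extPow {R M : Type*} [CommRing R] [AddCommGroup M] [Module R M]
    (k : ℕ) (f : M →ₗ[R] M) : Module.End R (⋀[R]^k M) :=
  (ExteriorAlgebra.map f).toLinearMap.restrict (p := ⋀[R]^k M) (q := ⋀[R]^k M) (fun x hx => by
    have mono : ∀ (j : ℕ) (A B : Submodule R (ExteriorAlgebra R M)), A ≤ B → A ^ j ≤ B ^ j := by
      intro j A B h
      induction j with
      | zero => exact le_rfl
      | succ n ih => rw [pow_succ, pow_succ]; exact mul_le_mul' ih h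
    have h1 : Submodule.map (ExteriorAlgebra.map f).toLinearMap (⋀[R]^k M) ≤ ⋀[R]^k M := by
      rw [exteriorPower, Submodule.map_pow, ι_range_map_map]
      refine mono _ _ _ ?_
      rintro z hz
      obtain ⟨y, -, rfl⟩ := hz
      exact LinearMap.mem_range_self _ y
    exact h1 ⟨x, hx, rfl⟩)

lemma extPow_coe_apply {R M : Type*} [CommRing R] [AddCommGroup M] [Module R M]
    (k : ℕ) (f : M →ₗ[R] M) (y : ⋀[R]^k M) :
    ((extPow k f y : ⋀[R]^k M) : ExteriorAlgebra R M)
      = ExteriorAlgebra.map f (y : ExteriorAlgebra R M) := rfl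

theorem extPow_sub_one_pow_ne_zero_block {K W : Type*} [Field K] [AddCommGroup W] [Module K W]
    [FiniteDimensional K W] (ℓ : ℕ) (hℓp : ℓ.Prime) (hℓ5 : 5 ≤ ℓ) [CharP K ℓ]
    (hdim : Module.finrank K W = ℓ - 1)
    (A : Module.End K W)
    (hblock : (A - 1) ^ (ℓ - 1) = 0 ∧ (A - 1) ^ (ℓ - 2) ≠ 0)
    (r : ℕ) (hr2 : 2 ≤ r) (hr3 : r ≤ ℓ - 3) :
    (extPow r A - 1) ^ (ℓ - 1) ≠ 0 := by
  intro H
  obtain ⟨hN1, hN2⟩ := hblock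
  set N : Module.End K W := A - 1 with hN
  -- a vector not killed by N ^ (ℓ - 2)
  have hvex : ∃ v : W, (N ^ (ℓ - 2)) v ≠ 0 := by
    by_contra h
    push_neg at h
    exact hN2 (LinearMap.ext fun u => h u)
  obtain ⟨v, hv⟩ := hvex
  obtain ⟨ξ, hξ⟩ : ∃ ξ : Module.Dual K W, ξ ((N ^ (ℓ - 2)) v) ≠ 0 := by
    by_contra h
    push_neg at h
    exact hv ((Module.forall_dual_apply_eq_zero_iff K _).mp h)
  set γ : ℕ → K := fun e => ξ ((N ^ e) v) with hγ
  have hγ0 : ∀ e, ℓ - 1 ≤ e → γ e = 0 := by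
    intro e he
    have hNe : N ^ e = 0 := by
      have h1 : N ^ e = N ^ (e - (ℓ - 1)) * N ^ (ℓ - 1) := by
        rw [← pow_add]
        congr 1
        omega
      rw [h1, hN1, mul_zero]
    simp only [hγ, hNe, LinearMap.zero_apply, map_zero]
  obtain ⟨t, htmono, htle, htsum⟩ := my_exists_T ℓ r hℓ5 hr2 hr3
  -- the expansion of A ^ m
  have hApow : ∀ (m : ℕ) (u : W), (A ^ m) u
      = ∑ k ∈ range (m + 1), (m.choose k : K) • ((N ^ k) u) := by
    intro m u
    have hA : A = N + 1 := by rw [hN]; abel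
    rw [hA, (Commute.one_right N).add_pow m, LinearMap.sum_apply]
    refine Finset.sum_congr rfl fun k hk => ?_
    rw [one_pow, mul_one, Module.End.mul_apply]
    rw [Module.End.natCast_apply, LinearMap.map_smul_of_tower, Nat.cast_smul_eq_nsmul]
  -- the alternating functional
  set π : W →ₗ[K] (Fin r → K) :=
    LinearMap.pi (fun j : Fin r => ξ ∘ₗ (N ^ (ℓ - 2 - t (j : ℕ)))) with hπ
  set fT : W [⋀^Fin r]→ₗ[K] K := Matrix.detRowAlternating.compLinearMap π with hfT
  set fl : ∀ i : ℕ, W [⋀^Fin i]→ₗ[K] K :=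
    Function.update (fun i => (0 : W [⋀^Fin i]→ₗ[K] K)) r fT with hfl
  set φ : ExteriorAlgebra K W →ₗ[K] K := ExteriorAlgebra.liftAlternating fl with hφ
  have hφval : ∀ u : Fin r → W, φ (ExteriorAlgebra.ιMulti K r u)
      = Matrix.det (Matrix.of fun i j : Fin r => ξ ((N ^ (ℓ - 2 - t (j : ℕ))) (u i))) := by
    intro u
    rw [hφ, ExteriorAlgebra.liftAlternating_apply_ιMulti, hfl, Function.update_self, hfT,
      AlternatingMap.compLinearMap_apply]
    rfl
  -- the element of the exterior power
  set wf : Fin r → W := fun i => (N ^ (i : ℕ)) v with hwf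
  have hxmem : ExteriorAlgebra.ιMulti K r wf ∈ ⋀[K]^r W :=
    ExteriorAlgebra.ιMulti_range K r (Set.mem_range_self wf)
  set x : ⋀[K]^r W := ⟨ExteriorAlgebra.ιMulti K r wf, hxmem⟩ with hx
  have hgm : ∀ m : ℕ, ((((extPow r A) ^ m) x : ⋀[K]^r W) : ExteriorAlgebra K W)
      = ExteriorAlgebra.ιMulti K r (fun i => (A ^ m) (wf i)) := by
    intro m
    induction m with
    | zero =>
      simp only [pow_zero, Module.End.one_apply, hx]
    | succ m ih =>
      rw [pow_succ' (extPow r A) m, Module.End.mul_apply]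
      rw [extPow_coe_apply, ih]
      rw [ExteriorAlgebra.map_apply_ιMulti]
      congr 1
      funext i
      simp only [Function.comp_apply]
      rw [← Module.End.mul_apply, ← pow_succ' A m]
  -- contradiction via the core computation
  have hzero : (∑ m ∈ range ℓ, (extPow r A) ^ m) x = 0 := by
    rw [← my_sub_one_pow (K := K) hℓp (by omega) (extPow r A)]
    rw [H, LinearMap.zero_apply]
  have hval : ∑ m ∈ range ℓ, φ ((((extPow r A) ^ m) x : ⋀[K]^r W) : ExteriorAlgebra K W) = 0 := by
    rw [← map_sum]
    have h1 : (∑ m ∈ range ℓ, ((((extPow r A) ^ m) x : ⋀[K]^r W) : ExteriorAlgebra K W))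
        = (((∑ m ∈ range ℓ, (extPow r A) ^ m) x : ⋀[K]^r W) : ExteriorAlgebra K W) := by
      rw [LinearMap.sum_apply, Submodule.coe_sum]
    rw [h1, hzero, Submodule.coe_zero, map_zero]
  have hentry : ∀ m : ℕ, φ ((((extPow r A) ^ m) x : ⋀[K]^r W) : ExteriorAlgebra K W)
      = (Matrix.of fun i j : Fin r =>
        ∑ k ∈ range (m + 1), γ (ℓ - 2 - t (j : ℕ) + ((i : ℕ) + k)) * (m.choose k : K)).det := by
    intro m
    rw [hgm m, hφval]
    congr 1
    ext i j
    simp only [Matrix.of_apply]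
    rw [hwf, hApow m ((N ^ (i : ℕ)) v), map_sum, map_sum]
    refine Finset.sum_congr rfl fun k hk => ?_
    rw [(N ^ (ℓ - 2 - t (j : ℕ))).map_smul, ξ.map_smul, smul_eq_mul, mul_comm]
    congr 1
    have hcomb : (N ^ k) ((N ^ (i : ℕ)) v) = (N ^ ((i : ℕ) + k)) v := by
      rw [← Module.End.mul_apply, ← pow_add, Nat.add_comm]
    rw [hcomb, ← Module.End.mul_apply, ← pow_add]
  have hcontr := my_core hℓp hℓ5 (le_trans (by omega) hr2) t htmono htle htsum γ hγ0 hξ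
  apply hcontr
  rw [← Finset.sum_congr rfl (fun m _ => hentry m), hval]
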